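/- arXiv:1804.00565 — 2 statements merged into one kernel-verified Lean document; each statement's English description precedes it below -/
import Mathlib

section
/- Every MV-algebra A with the product defined by the supremum for non-zero elements, namely a·b := a ∨ b if a ≠ 0 and b ≠ 0, and a·b := 0 otherwise, is an MVW-rig: this product is associative, commutative, and satisfies, for all a, b, c ∈ A, a·0 = 0, a·(b ⊕ c) ≤ a·b ⊕ a·c, and a·b ⊖ a·c ≤ a·(b ⊖ c). -/
/-- The data of an MV-algebra: a binary sum, a negation and a zero. -/
structure MVData (A : Type*) where
  add : A → A → A
  neg : A → A
  zero : A

namespace MVData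

variable {A : Type*} (m : MVData A)

/-- The top element `u = ¬0`. -/
def unit : A := m.neg m.zero

/-- Truncated difference `x ⊖ y = ¬(¬x ⊕ y)`. -/
def ominus (x y : A) : A := m.neg (m.add (m.neg x) y)

/-- The product `x ⊙ y = ¬(¬x ⊕ ¬y)`. -/
def odot (x y : A) : A := m.neg (m.add (m.neg x) (m.neg y))

/-- The MV order: `x ≤ y` iff `x ⊖ y = 0`. -/
def le (x y : A) : Prop := m.ominus x y = m.zero

/-- The lattice join `x ∨ y = (x ⊖ y) ⊕ y`. -/
def sup (x y : A) : A := m.add (m.ominus x y) y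

/-- The lattice meet `x ∧ y = ¬(¬x ∨ ¬y)`. -/
def inf (x y : A) : A := m.neg (m.sup (m.neg x) (m.neg y))

/-- The MV-algebra axioms: `(A, ⊕, 0)` is a commutative monoid and `¬` satisfies
`¬¬x = x`, `x ⊕ ¬0 = ¬0` and `¬(¬x ⊕ y) ⊕ y = ¬(¬y ⊕ x) ⊕ x`. -/
structure IsMV : Prop where
  add_assoc : ∀ x y z : A, m.add (m.add x y) z = m.add x (m.add y z)
  add_comm : ∀ x y : A, m.add x y = m.add y x
  add_zero : ∀ x : A, m.add x m.zero = x
  neg_neg : ∀ x : A, m.neg (m.neg x) = x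
  add_unit : ∀ x : A, m.add x (m.neg m.zero) = m.neg m.zero
  lukasiewicz : ∀ x y : A,
    m.add (m.neg (m.add (m.neg x) y)) y = m.add (m.neg (m.add (m.neg y) x)) x

end MVData

open scoped Classical in
/-- The product given by the supremum on non-zero elements: `a·b = a ∨ b` if
`a ≠ 0` and `b ≠ 0`, and `a·b = 0` otherwise. -/
noncomputable def MVData.supProd {A : Type*} (m : MVData A) (a b : A) : A :=
  if a = m.zero ∨ b = m.zero then m.zero else m.sup a b

section Lemmas

namespace MVData

variable {A : Type*} {m : MVData A} (h : m.IsMV)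

include h

lemma zero_add' (x : A) : m.add m.zero x = x := by
  rw [h.add_comm, h.add_zero]

lemma unit_add (x : A) : m.add (m.neg m.zero) x = m.neg m.zero := by
  rw [h.add_comm, h.add_unit]

lemma neg_add_self' (x : A) : m.add (m.neg x) x = m.neg m.zero := by
  have hl := h.lukasiewicz x (m.neg m.zero)
  have h1 : m.add (m.neg x) (m.neg m.zero) = m.neg m.zero := h.add_unit _
  rw [h1, h.neg_neg, zero_add' h, zero_add' h] at hl
  exact hl.symm

lemma ominus_self (x : A) : m.ominus x x = m.zero := by
  show m.neg (m.add (m.neg x) x) = m.zero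
  rw [neg_add_self' h, h.neg_neg]

lemma le_refl' (x : A) : m.le x x := ominus_self h x

lemma zero_le (x : A) : m.le m.zero x := by
  show m.neg (m.add (m.neg m.zero) x) = m.zero
  rw [unit_add h, h.neg_neg]

lemma ominus_zero (x : A) : m.ominus x m.zero = x := by
  show m.neg (m.add (m.neg x) m.zero) = x
  rw [h.add_zero, h.neg_neg]

lemma le_add_left (x y : A) : m.le x (m.add y x) := by
  show m.neg (m.add (m.neg x) (m.add y x)) = m.zero
  rw [h.add_comm y x, ← h.add_assoc, neg_add_self' h, unit_add h, h.neg_neg]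

lemma le_add_right (x y : A) : m.le x (m.add x y) := by
  rw [h.add_comm x y]; exact le_add_left h x y

lemma sup_comm' (x y : A) : m.sup x y = m.sup y x := h.lukasiewicz x y

lemma le_antisymm' {x y : A} (hxy : m.le x y) (hyx : m.le y x) : x = y := by
  have hl := h.lukasiewicz x y
  have h1 : m.neg (m.add (m.neg x) y) = m.zero := hxy
  have h2 : m.neg (m.add (m.neg y) x) = m.zero := hyx
  rw [h1, h2, zero_add' h, zero_add' h] at hl
  exact hl.symm

lemma sup_eq_right {x y : A} (hxy : m.le x y) : m.sup x y = y := by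
  have h1 : m.ominus x y = m.zero := hxy
  show m.add (m.ominus x y) y = y
  rw [h1, zero_add' h]

lemma sup_eq_left {x y : A} (hxy : m.le x y) : m.sup y x = y := by
  rw [sup_comm' h, sup_eq_right h hxy]

lemma eq_ominus_add {x y : A} (hxy : m.le x y) : y = m.add (m.ominus y x) x :=
  (sup_eq_left h hxy).symm

lemma add_le_add_left' {x y : A} (hxy : m.le x y) (z : A) :
    m.le (m.add z x) (m.add z y) := by
  have key := eq_ominus_add h hxy
  rw [key, h.add_comm (m.ominus y x) x, ← h.add_assoc]
  exact le_add_right h _ _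

lemma add_le_add_right' {x y : A} (hxy : m.le x y) (z : A) :
    m.le (m.add x z) (m.add y z) := by
  rw [h.add_comm x z, h.add_comm y z]
  exact add_le_add_left' h hxy z

lemma le_trans' {x y z : A} (hxy : m.le x y) (hyz : m.le y z) : m.le x z := by
  have key : z = m.add (m.add (m.ominus z y) (m.ominus y x)) x :=
    (eq_ominus_add h hyz).trans
      ((congrArg (m.add (m.ominus z y)) (eq_ominus_add h hxy)).trans
        (h.add_assoc _ _ _).symm)
  rw [key]
  exact le_add_left h x _

lemma neg_le_neg' {x y : A} (hxy : m.le x y) : m.le (m.neg y) (m.neg x) := by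
  show m.neg (m.add (m.neg (m.neg y)) (m.neg x)) = m.zero
  rw [h.neg_neg, h.add_comm y (m.neg x)]
  exact hxy

lemma ominus_le_ominus_left {x z : A} (hxz : m.le x z) (y : A) :
    m.le (m.ominus x y) (m.ominus z y) :=
  neg_le_neg' h (add_le_add_right' h (neg_le_neg' h hxz) y)

lemma le_sup_right (x y : A) : m.le y (m.sup x y) := le_add_left h y (m.ominus x y)

lemma le_sup_left (x y : A) : m.le x (m.sup x y) := by
  rw [sup_comm' h]
  exact le_sup_right h y x

lemma sup_le' {x y z : A} (hxz : m.le x z) (hyz : m.le y z) : m.le (m.sup x y) z := by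
  have h2 : m.le (m.add (m.ominus x y) y) (m.add (m.ominus z y) y) :=
    add_le_add_right' h (ominus_le_ominus_left h hxz y) y
  have h3 : m.add (m.ominus z y) y = z := sup_eq_left h hyz
  rw [h3] at h2
  exact h2

lemma sup_assoc' (a b c : A) : m.sup (m.sup a b) c = m.sup a (m.sup b c) := by
  apply le_antisymm' h
  · apply sup_le' h
    · apply sup_le' h
      · exact le_sup_left h a _
      · exact le_trans' h (le_sup_left h b c) (le_sup_right h a _)
    · exact le_trans' h (le_sup_right h b c) (le_sup_right h a _)
  · apply sup_le' h
    · exact le_trans' h (le_sup_left h a b) (le_sup_left h _ c)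
    · apply sup_le' h
      · exact le_trans' h (le_sup_right h a b) (le_sup_left h _ c)
      · exact le_sup_right h _ c

lemma add_ominus_le (y z : A) : m.le (m.ominus (m.add y z) z) y := by
  show m.neg (m.add (m.neg (m.neg (m.add (m.neg (m.add y z)) z))) y) = m.zero
  rw [h.neg_neg, h.add_assoc, h.add_comm z y, neg_add_self' h, h.neg_neg]

lemma ominus_le_of_le_add {x y z : A} (hx : m.le x (m.add y z)) :
    m.le (m.ominus x z) y :=
  le_trans' h (ominus_le_ominus_left h hx z) (add_ominus_le h y z)

lemma eq_zero_of_le_zero {x : A} (hx : m.le x m.zero) : x = m.zero :=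
  le_antisymm' h hx (zero_le h x)

lemma sup_eq_zero_left {x y : A} (hs : m.sup x y = m.zero) : x = m.zero :=
  eq_zero_of_le_zero h (hs ▸ le_sup_left h x y)

omit h in
lemma supProd_zero_right (a : A) : m.supProd a m.zero = m.zero := by
  simp [MVData.supProd]

end MVData

end Lemmas

/-- Every MV-algebra with the product defined by the supremum for
non-zero elements is an MVW-rig: this product is associative, commutative, and
satisfies `a·0 = 0`, `a·(b ⊕ c) ≤ a·b ⊕ a·c` and `a·b ⊖ a·c ≤ a·(b ⊖ c)`. -/
theorem sup_product_is_mvwrig {A : Type*} (m : MVData A) (hmv : m.IsMV) :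
    ∀ a b c : A,
      m.supProd (m.supProd a b) c = m.supProd a (m.supProd b c) ∧
      m.supProd a b = m.supProd b a ∧
      m.supProd a m.zero = m.zero ∧
      m.le (m.supProd a (m.add b c)) (m.add (m.supProd a b) (m.supProd a c)) ∧
      m.le (m.ominus (m.supProd a b) (m.supProd a c)) (m.supProd a (m.ominus b c)) := by
  intro a b c
  refine ⟨?_, ?_, ?_, ?_, ?_⟩
  · -- associativity
    by_cases ha : a = m.zero
    · subst ha; simp [MVData.supProd]
    · by_cases hb : b = m.zero
      · subst hb; simp [MVData.supProd]
      · by_cases hc : c = m.zero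
        · subst hc; simp [MVData.supProd]
        · have hab : m.sup a b ≠ m.zero := fun hh => ha (MVData.sup_eq_zero_left hmv hh)
          have hbc : m.sup b c ≠ m.zero := fun hh => hb (MVData.sup_eq_zero_left hmv hh)
          have e1 : m.supProd a b = m.sup a b := by simp [MVData.supProd, ha, hb]
          have e2 : m.supProd b c = m.sup b c := by simp [MVData.supProd, hb, hc]
          rw [e1, e2]
          have e3 : m.supProd (m.sup a b) c = m.sup (m.sup a b) c := by
            simp [MVData.supProd, hab, hc]
          have e4 : m.supProd a (m.sup b c) = m.sup a (m.sup b c) := by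
            simp [MVData.supProd, ha, hbc]
          rw [e3, e4, MVData.sup_assoc' hmv]
  · -- commutativity
    simp only [MVData.supProd]
    by_cases hab : a = m.zero ∨ b = m.zero
    · rw [if_pos hab, if_pos hab.symm]
    · rw [if_neg hab, if_neg (fun hh => hab hh.symm), MVData.sup_comm' hmv]
  · -- a · 0 = 0
    simp [MVData.supProd]
  · -- subdistributivity
    by_cases ha : a = m.zero
    · have hz : ∀ x : A, m.supProd a x = m.zero := fun x => by simp [MVData.supProd, ha]
      rw [hz, hz, hz]
      exact MVData.zero_le hmv _
    · have esup : ∀ x : A, x ≠ m.zero → m.supProd a x = m.sup a x := fun x hx => by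
        simp [MVData.supProd, ha, hx]
      by_cases hb : b = m.zero
      · subst hb
        rw [MVData.zero_add' hmv c, MVData.supProd_zero_right, MVData.zero_add' hmv]
        exact MVData.le_refl' hmv _
      · by_cases hc : c = m.zero
        · subst hc
          rw [hmv.add_zero b, MVData.supProd_zero_right, hmv.add_zero]
          exact MVData.le_refl' hmv _
        · have hbc' : m.add b c ≠ m.zero := fun hh =>
            hc (MVData.eq_zero_of_le_zero hmv (hh ▸ MVData.le_add_left hmv c b))
          rw [esup _ hbc', esup _ hb, esup _ hc]
          apply MVData.sup_le' hmv
          · exact MVData.le_trans' hmv (MVData.le_sup_left hmv a b) (MVData.le_add_right hmv _ _)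
          · exact MVData.le_trans' hmv (MVData.add_le_add_right' hmv (MVData.le_sup_right hmv a b) c)
              (MVData.add_le_add_left' hmv (MVData.le_sup_right hmv a c) (m.sup a b))
  · -- a·b ⊖ a·c ≤ a·(b ⊖ c)
    by_cases ha : a = m.zero
    · have hz : ∀ x : A, m.supProd a x = m.zero := fun x => by simp [MVData.supProd, ha]
      rw [hz, hz, hz]
      rw [show m.ominus m.zero m.zero = m.zero from MVData.zero_le hmv m.zero]
      exact MVData.zero_le hmv _
    · have esup : ∀ x : A, x ≠ m.zero → m.supProd a x = m.sup a x := fun x hx => by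
        simp [MVData.supProd, ha, hx]
      by_cases hb : b = m.zero
      · subst hb
        rw [MVData.supProd_zero_right]
        rw [show m.ominus m.zero (m.supProd a c) = m.zero from MVData.zero_le hmv _]
        exact MVData.zero_le hmv _
      · by_cases hc : c = m.zero
        · subst hc
          rw [MVData.supProd_zero_right, MVData.ominus_zero hmv b, MVData.ominus_zero hmv]
          exact MVData.le_refl' hmv _
        · rw [esup _ hb, esup _ hc]
          by_cases hbc : m.ominus b c = m.zero
          · rw [hbc, MVData.supProd_zero_right]
            have hle : m.le (m.sup a b) (m.sup a c) :=
              MVData.sup_le' hmv (MVData.le_sup_left hmv a c)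
                (MVData.le_trans' hmv (show m.le b c from hbc) (MVData.le_sup_right hmv a c))
            rw [show m.ominus (m.sup a b) (m.sup a c) = m.zero from hle]
            exact MVData.zero_le hmv _
          · rw [esup _ hbc]
            apply MVData.ominus_le_of_le_add hmv
            apply MVData.sup_le' hmv
            · exact MVData.le_trans' hmv (MVData.le_sup_left hmv a (m.ominus b c)) (MVData.le_add_right hmv _ _)
            · exact MVData.le_trans' hmv (MVData.le_sup_left hmv b c)
                (MVData.le_trans' hmv (MVData.add_le_add_right' hmv (MVData.le_sup_right hmv a (m.ominus b c)) c)
                  (MVData.add_le_add_left' hmv (MVData.le_sup_right hmv a c) (m.sup a (m.ominus b c))))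
end

section
/- Let A be a PMV_f-algebra. Then (1) every ideal of the underlying MV-algebra of A is absorbent, hence is an ideal of the MVW-rig A (Id_W(A) = Id(A)); and (2) every prime ideal of the MVW-rig A is a prime ideal of the underlying MV-algebra (Spec_W(A) ⊆ Spec(A)). -/
section Aux

variable {A : Type*} {m : MVData A} (hmv : m.IsMV)
include hmv

lemma aux_neg_unit : m.neg (m.neg m.zero) = m.zero := hmv.neg_neg _

/-- `¬x ⊕ x = u`. -/
lemma aux_neg_add_self (x : A) :
    m.add (m.neg x) x = m.neg m.zero := by
  have h := hmv.lukasiewicz x (m.neg m.zero)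
  rw [hmv.add_unit, aux_neg_unit hmv, hmv.add_comm m.zero x, hmv.add_zero] at h
  exact h.symm

lemma aux_zero_add (x : A) : m.add m.zero x = x := by
  rw [hmv.add_comm, hmv.add_zero]

/-- `x ≤ w ⊕ x`. -/
lemma aux_le_add_self (w x : A) : m.le x (m.add w x) := by
  unfold MVData.le MVData.ominus
  rw [hmv.add_comm w x, ← hmv.add_assoc, hmv.add_comm (m.neg x) x,
    hmv.add_comm, hmv.add_comm x (m.neg x), aux_neg_add_self hmv,
    hmv.add_unit, aux_neg_unit hmv]

/-- `x ≤ y` iff `y = w ⊕ x` for some `w`. -/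
lemma aux_le_iff (x y : A) : m.le x y ↔ ∃ w, y = m.add w x := by
  constructor
  · intro h
    refine ⟨m.ominus y x, ?_⟩
    have hl := hmv.lukasiewicz x y
    unfold MVData.le MVData.ominus at h
    unfold MVData.ominus
    rw [h, aux_zero_add hmv] at hl
    exact hl
  · rintro ⟨w, rfl⟩
    exact aux_le_add_self hmv w x

lemma aux_le_trans {x y z : A} (h1 : m.le x y) (h2 : m.le y z) : m.le x z := by
  rw [aux_le_iff hmv] at h1 h2 ⊢
  obtain ⟨w1, rfl⟩ := h1
  obtain ⟨w2, rfl⟩ := h2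
  exact ⟨m.add w2 w1, (hmv.add_assoc _ _ _).symm⟩

lemma aux_neg_antitone {x y : A} (h : m.le x y) : m.le (m.neg y) (m.neg x) := by
  unfold MVData.le MVData.ominus at h ⊢
  rw [hmv.neg_neg, hmv.add_comm]
  exact h

lemma aux_inf_le_left (a b : A) : m.le (m.inf a b) a := by
  have h1 : m.le (m.neg a) (m.sup (m.neg a) (m.neg b)) := by
    unfold MVData.sup MVData.ominus
    rw [hmv.lukasiewicz]
    exact aux_le_add_self hmv _ _
  have := aux_neg_antitone hmv h1
  rw [hmv.neg_neg] at this
  exact this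

end Aux

/-- In a `PMV_f`-algebra `A`: (1) every ideal of the underlying
MV-algebra is absorbent, hence is an MVW-rig ideal (`Id_W(A) = Id(A)`); and (2) every
prime ideal of the MVW-rig `A` is a prime ideal of the underlying MV-algebra
(`Spec_W(A) ⊆ Spec(A)`). -/
theorem pmvf_ideals_and_spectra {A : Type*} (m : MVData A) (hmv : m.IsMV)
    (mul : A → A → A)
    (mul_assoc : ∀ a b c : A, mul (mul a b) c = mul a (mul b c))
    (mul_comm : ∀ a b : A, mul a b = mul b a)
    (mul_zero : ∀ a : A, mul a m.zero = m.zero)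
    (mul_add_le : ∀ a b c : A, m.le (mul a (m.add b c)) (m.add (mul a b) (mul a c)))
    (ominus_mul_le : ∀ a b c : A,
      m.le (m.ominus (mul a b) (mul a c)) (mul a (m.ominus b c)))
    (mul_le_inf : ∀ a b : A, m.le (mul a b) (m.inf a b))
    (mul_ominus : ∀ a b c : A, mul a (m.ominus b c) = m.ominus (mul a b) (mul a c)) :
    (∀ I : Set A, I.Nonempty →
      (∀ a b : A, m.le a b → b ∈ I → a ∈ I) →
      (∀ a b : A, a ∈ I → b ∈ I → m.add a b ∈ I) →
      ∀ a b : A, a ∈ I → mul a b ∈ I) ∧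
    (∀ P : Set A, P.Nonempty →
      (∀ a b : A, m.le a b → b ∈ P → a ∈ P) →
      (∀ a b : A, a ∈ P → b ∈ P → m.add a b ∈ P) →
      (∀ a b : A, a ∈ P → mul a b ∈ P) →
      (∀ a b : A, mul a b ∈ P → a ∈ P ∨ b ∈ P) →
      ∀ a b : A, m.inf a b ∈ P → a ∈ P ∨ b ∈ P) := by
  constructor
  · intro I _ hdown _ a b ha
    exact hdown _ _ (aux_le_trans hmv (mul_le_inf a b) (aux_inf_le_left hmv a b)) ha
  · intro P _ hdown _ _ hprime a b hab
    exact hprime a b (hdown _ _ (mul_le_inf a b) hab)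
end
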